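/- For all n ≥ 2 and r ∈ [1..n/2], (r/n)·(1 - r/n)^{n-1}·(en/r)^r ≥ 1. -/

import Mathlib

theorem rate_success_product_ge_one (n r : ℕ) (hn : 2 ≤ n) (hr1 : 1 ≤ r) (hr2 : r ≤ n / 2) :
    1 ≤ ((r : ℝ) / n) * (1 - (r : ℝ) / n) ^ (n - 1) * (Real.exp 1 * n / r) ^ r := by
  have h2r : 2 * r ≤ n := by omega
  have hn0 : (0:ℝ) < n := by positivity
  have hr0 : (0:ℝ) < r := by exact_mod_cast Nat.pos_of_ne_zero (by omega)
  have hr1' : (1:ℝ) ≤ r := by exact_mod_cast hr1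
  set x : ℝ := (r:ℝ) / n with hxdef
  have hx0 : 0 < x := by positivity
  have hx2 : x ≤ 1/2 := by
    rw [hxdef, div_le_div_iff₀ hn0 (by norm_num)]
    have : (2:ℝ) * r ≤ n := by exact_mod_cast h2r
    linarith
  have h1x : (1:ℝ)/2 ≤ 1 - x := by linarith
  have h1x0 : (0:ℝ) < 1 - x := by linarith
  -- chord bound: log (1-x) ≥ -2 log 2 * x
  have chord : -(2 * Real.log 2) * x ≤ Real.log (1 - x) := by
    have h := (strictConcaveOn_log_Ioi.concaveOn).2
      (show (1/2:ℝ) ∈ Set.Ioi 0 by norm_num) (show (1:ℝ) ∈ Set.Ioi 0 by norm_num)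
      (show (0:ℝ) ≤ 2 * x by positivity) (show (0:ℝ) ≤ 1 - 2 * x by linarith)
      (by ring)
    simp only [smul_eq_mul, Real.log_one, mul_zero, add_zero, mul_one] at h
    have e1 : 2 * x * (1/2) + (1 - 2*x) = 1 - x := by ring
    rw [e1] at h
    have e2 : Real.log (1/2) = -Real.log 2 := by
      rw [Real.log_div one_ne_zero (by norm_num), Real.log_one]; ring
    rw [e2] at h
    nlinarith [h]
  -- log(1-x) ≥ -x/(1-x)
  have hlow : -(x / (1 - x)) ≤ Real.log (1 - x) := by
    have h := Real.log_le_sub_one_of_pos (show (0:ℝ) < (1-x)⁻¹ by positivity)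
    rw [Real.log_inv] at h
    have : (1-x)⁻¹ - 1 = x / (1-x) := by field_simp; ring
    linarith [this ▸ h]
  have hlogx : Real.log x ≤ -Real.log 2 := by
    have : Real.log x ≤ Real.log (1/2) := Real.log_le_log hx0 hx2
    rwa [Real.log_div one_ne_zero (by norm_num), Real.log_one, zero_sub] at this
  have hBA : Real.log x ≤ Real.log (1 - x) := Real.log_le_log hx0 (by linarith)
  -- A ≥ 1 - log 2 ≥ 0
  have hA : 0 ≤ Real.log (1 - x) / x + 1 - Real.log x := by
    have hdiv : -(2 * Real.log 2) ≤ Real.log (1 - x) / x := by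
      rw [le_div_iff₀ hx0]; nlinarith
    have hl2 : Real.log 2 ≤ 1 := by
      nlinarith [Real.log_le_sub_one_of_pos (show (0:ℝ) < 2 by norm_num)]
    linarith
  -- A + B ≥ 0
  have hAB : 0 ≤ Real.log (1 - x) / x + 1 - Real.log (1 - x) := by
    have key : -(x / (1 - x)) * ((1 - x) / x) ≤ Real.log (1 - x) * ((1 - x) / x) := by
      apply mul_le_mul_of_nonneg_right hlow (by positivity)
    have e : -(x / (1 - x)) * ((1 - x) / x) = -1 := by field_simp
    rw [e] at key
    have e2 : Real.log (1 - x) * ((1 - x) / x) = Real.log (1 - x) / x - Real.log (1 - x) := by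
      field_simp
    rw [e2] at key
    linarith
  -- main log inequality
  have hmain : 0 ≤ Real.log x + ((n:ℝ) - 1) * Real.log (1 - x) + (r:ℝ) * (1 - Real.log x) := by
    have hnx : (n:ℝ) - 1 = (r:ℝ) / x - 1 := by
      rw [hxdef]; field_simp
    rw [hnx]
    have expand : Real.log x + ((r:ℝ)/x - 1) * Real.log (1 - x) + (r:ℝ) * (1 - Real.log x)
        = (r:ℝ) * (Real.log (1 - x) / x + 1 - Real.log x)
          + (Real.log x - Real.log (1 - x)) := by
      field_simp; ring
    rw [expand]
    have h1 : (Real.log (1 - x) / x + 1 - Real.log x) ≤ (r:ℝ) * (Real.log (1 - x) / x + 1 - Real.log x) := by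
      nlinarith
    have h2 : 0 ≤ (Real.log (1 - x) / x + 1 - Real.log x) + (Real.log x - Real.log (1 - x)) := by
      linarith [hAB]
    linarith
  -- convert to goal
  have hP : (0:ℝ) < x * (1 - x) ^ (n - 1) * (Real.exp 1 * n / r) ^ r := by positivity
  rw [← Real.log_nonneg_iff hP]
  rw [Real.log_mul (by positivity) (by positivity), Real.log_mul (ne_of_gt hx0) (by positivity),
      Real.log_pow, Real.log_pow]
  have hcast : ((n - 1 : ℕ) : ℝ) = (n:ℝ) - 1 := by
    have : 1 ≤ n := by omega
    push_cast [this]; ring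
  have hlogE : Real.log (Real.exp 1 * n / r) = 1 - Real.log x := by
    rw [Real.log_div (by positivity) (ne_of_gt hr0), Real.log_mul (Real.exp_ne_zero 1) (ne_of_gt hn0),
        Real.log_exp, hxdef, Real.log_div (ne_of_gt hr0) (ne_of_gt hn0)]
    ring
  rw [hcast, hlogE]
  linarith [hmain]
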